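/- For finite multisets A, B, C of points in a metric space with |A| = |B|, the minimum cost of a perfect matching between A ⊎ C and B ⊎ C equals the minimum cost of a perfect matching between A and B, where the cost of a matching is the sum of distances between matched pairs. -/

import Mathlib

/-- The minimum cost of a perfect matching between two equal-size multisets
in a metric space: the infimum over all pairings (given by listing the two
multisets and zipping them) of the sum of distances of matched pairs. -/
noncomputable def mdist {V : Type*} [MetricSpace V] (A B : Multiset V) : ℝ :=
  sInf {c : ℝ | ∃ l₁ l₂ : List V, (l₁ : Multiset V) = A ∧ (l₂ : Multiset V) = B ∧
    c = (List.zipWith dist l₁ l₂).sum}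

namespace MdistAux

variable {V : Type*} [MetricSpace V]

/-- The cost of a matching given as a multiset of pairs. -/
noncomputable def mcost (M : Multiset (V × V)) : ℝ :=
  (M.map fun p => dist p.1 p.2).sum

def mset (A B : Multiset V) : Set ℝ :=
  {c : ℝ | ∃ l₁ l₂ : List V, (l₁ : Multiset V) = A ∧ (l₂ : Multiset V) = B ∧
    c = (List.zipWith dist l₁ l₂).sum}

lemma mdist_eq (A B : Multiset V) : mdist A B = sInf (mset A B) := rfl

lemma zipWith_dist_eq_map (l₁ l₂ : List V) :
    List.zipWith dist l₁ l₂ = (l₁.zip l₂).map fun p => dist p.1 p.2 := by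
  induction l₁ generalizing l₂ with
  | nil => simp
  | cons a t ih =>
    cases l₂ with
    | nil => simp
    | cons b t₂ => simp [ih]

lemma mem_mset_nonneg {A B : Multiset V} {c : ℝ} (hc : c ∈ mset A B) : 0 ≤ c := by
  obtain ⟨l₁, l₂, -, -, rfl⟩ := hc
  apply List.sum_nonneg
  intro a ha
  rw [zipWith_dist_eq_map] at ha
  obtain ⟨p, -, rfl⟩ := List.mem_map.1 ha
  exact dist_nonneg

lemma bddBelow_mset (A B : Multiset V) : BddBelow (mset A B) :=
  ⟨0, fun _ hc => mem_mset_nonneg hc⟩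

lemma nonempty_mset (A B : Multiset V) : (mset A B).Nonempty :=
  ⟨_, A.toList, B.toList, by simp, by simp, rfl⟩

/-- Membership in the defining set via a multiset of pairs. -/
lemma mcost_mem {A B : Multiset V} {M : Multiset (V × V)}
    (hf : M.map Prod.fst = A) (hs : M.map Prod.snd = B) : mcost M ∈ mset A B := by
  refine ⟨M.toList.map Prod.fst, M.toList.map Prod.snd, ?_, ?_, ?_⟩
  · rw [← hf]; rw [← Multiset.map_coe, Multiset.coe_toList]
  · rw [← hs]; rw [← Multiset.map_coe, Multiset.coe_toList]
  · rw [List.zipWith_map, List.zipWith_self]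
    show mcost M = _
    unfold mcost
    conv_lhs => rw [← Multiset.coe_toList M]
    rw [Multiset.map_coe, Multiset.sum_coe]

/-- Key uncrossing lemma: a matching of `x ::ₘ A` with `x ::ₘ B` can be
shortcut to a matching of `A` with `B` of no greater cost. -/
lemma reduce (x : V) {A B : Multiset V} (M : Multiset (V × V))
    (hf : M.map Prod.fst = x ::ₘ A) (hs : M.map Prod.snd = x ::ₘ B) :
    ∃ M' : Multiset (V × V), M'.map Prod.fst = A ∧ M'.map Prod.snd = B ∧
      mcost M' ≤ mcost M := by
  classical
  have hx₁ : x ∈ M.map Prod.fst := by rw [hf]; exact Multiset.mem_cons_self _ _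
  have hx₂ : x ∈ M.map Prod.snd := by rw [hs]; exact Multiset.mem_cons_self _ _
  obtain ⟨p, hpM, hp⟩ := Multiset.mem_map.1 hx₁
  obtain ⟨q, hqM, hq⟩ := Multiset.mem_map.1 hx₂
  by_cases hxx : (x, x) ∈ M
  · -- the pair (x,x) occurs; just remove it
    obtain ⟨M', rfl⟩ : ∃ M', M = (x, x) ::ₘ M' :=
      ⟨M.erase (x, x), (Multiset.cons_erase hxx).symm⟩
    refine ⟨M', ?_, ?_, ?_⟩
    · have := hf; rw [Multiset.map_cons] at this
      exact (Multiset.cons_inj_right x).1 this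
    · have := hs; rw [Multiset.map_cons] at this
      exact (Multiset.cons_inj_right x).1 this
    · simp [mcost]
  · -- p = (x, b) and q = (a, x) with p ≠ q; shortcut to (a, b)
    have hpq : p ≠ q := by
      rintro rfl
      apply hxx
      have : p = (x, x) := Prod.ext hp hq
      rwa [← this]
    set a := q.1
    set b := p.2
    have hqM' : q ∈ M.erase p := Multiset.mem_erase_of_ne (Ne.symm hpq) |>.2 hqM
    obtain ⟨M'', hM''⟩ : ∃ M'', M = p ::ₘ q ::ₘ M'' :=
      ⟨(M.erase p).erase q, by
        rw [Multiset.cons_erase hqM', Multiset.cons_erase hpM]⟩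
    refine ⟨(a, b) ::ₘ M'', ?_, ?_, ?_⟩
    · have := hf
      rw [hM'', Multiset.map_cons, Multiset.map_cons, hp] at this
      rw [Multiset.map_cons]
      exact (Multiset.cons_inj_right x).1 this
    · have := hs
      rw [hM'', Multiset.map_cons, Multiset.map_cons, hq, Multiset.cons_swap] at this
      rw [Multiset.map_cons]
      exact (Multiset.cons_inj_right x).1 this
    · rw [hM'']
      simp only [mcost, Multiset.map_cons, Multiset.sum_cons]
      have htri : dist a b ≤ dist q.1 q.2 + dist p.1 p.2 := by
        calc dist a b ≤ dist a x + dist x b := dist_triangle _ _ _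
        _ = dist q.1 q.2 + dist p.1 p.2 := by rw [hq, hp]
      linarith

lemma mdist_cons_le (x : V) (A B : Multiset V) :
    mdist (x ::ₘ A) (x ::ₘ B) ≤ mdist A B := by
  rw [mdist_eq, mdist_eq]
  apply csInf_le_csInf (bddBelow_mset _ _) (nonempty_mset A B)
  rintro c ⟨l₁, l₂, h₁, h₂, rfl⟩
  exact ⟨x :: l₁, x :: l₂, by rw [← Multiset.cons_coe, h₁], by rw [← Multiset.cons_coe, h₂],
    by simp⟩

lemma le_mdist_cons (x : V) {A B : Multiset V}
    (hAB : Multiset.card A = Multiset.card B) :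
    mdist A B ≤ mdist (x ::ₘ A) (x ::ₘ B) := by
  rw [mdist_eq, mdist_eq]
  apply le_csInf (nonempty_mset _ _)
  rintro c ⟨l₁, l₂, h₁, h₂, rfl⟩
  have hlen : l₁.length = l₂.length := by
    have e₁ : l₁.length = Multiset.card (x ::ₘ A) := by
      rw [← h₁]; simp
    have e₂ : l₂.length = Multiset.card (x ::ₘ B) := by
      rw [← h₂]; simp
    rw [e₁, e₂]; simp [hAB]
  set M : Multiset (V × V) := ((l₁.zip l₂ : List (V × V)) : Multiset (V × V))
  have hf : M.map Prod.fst = x ::ₘ A := by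
    rw [← h₁]
    show Multiset.map Prod.fst ((l₁.zip l₂ : List (V × V)) : Multiset (V × V)) = _
    rw [Multiset.map_coe, List.map_fst_zip hlen.le]
  have hsd : M.map Prod.snd = x ::ₘ B := by
    rw [← h₂]
    show Multiset.map Prod.snd ((l₁.zip l₂ : List (V × V)) : Multiset (V × V)) = _
    rw [Multiset.map_coe, List.map_snd_zip hlen.ge]
  obtain ⟨M', hf', hs', hle⟩ := reduce x M hf hsd
  have hcost : mcost M = (List.zipWith dist l₁ l₂).sum := by
    rw [zipWith_dist_eq_map]
    simp [mcost, M, ← Multiset.map_coe, ← Multiset.sum_coe]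
  calc sInf (mset A B) ≤ mcost M' := csInf_le (bddBelow_mset _ _) (mcost_mem hf' hs')
  _ ≤ mcost M := hle
  _ = _ := hcost

lemma mdist_cons (x : V) {A B : Multiset V}
    (hAB : Multiset.card A = Multiset.card B) :
    mdist (x ::ₘ A) (x ::ₘ B) = mdist A B :=
  le_antisymm (mdist_cons_le x A B) (le_mdist_cons x hAB)

end MdistAux

theorem stmt0 {V : Type*} [MetricSpace V] (A B C : Multiset V)
    (hAB : Multiset.card A = Multiset.card B) :
    mdist (A + C) (B + C) = mdist A B := by
  induction C using Multiset.induction_on with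
  | empty => simp
  | cons x C ih =>
    rw [Multiset.add_cons, Multiset.add_cons,
      MdistAux.mdist_cons x (by simp [hAB]), ih]
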